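/- Let K be a field, x, y ∈ K with x ≠ 0, y ≠ 0, x + y ≠ 1, and let z ∈ K. Define the map φ : K → K by φ(w) = w + z·(w − 1)/(x + y − 1). Then φ is a homomorphism from the Conway algebra structure on K with operations u | w = x⁻¹·(w − y·u), u ∗ w = y⁻¹·(w − x·u) and basepoints (x+y)^(n−1), to the Conway algebra structure on K with operations u |' w = x⁻¹·(w − z − y·u), u ∗' w = y⁻¹·(w − z − x·u) and basepoints (x+y)^(n−1) + z·∑_{k=0}^{n−2}(x+y)^k. That is: (1) φ((x+y)^(n−1)) = (x+y)^(n−1) + z·∑_{k=0}^{n−2}(x+y)^k for all n ≥ 1; (2) φ(u | w) = φ(u) |' φ(w) for all u, w ∈ K; (3) φ(u ∗ w) = φ(u) ∗' φ(w) for all u, w ∈ K. (The algebraic content of Proposition 3.38(b): the three-variable invariant is determined by the Jones–Conway polynomial via w_L(x,y,z) = w_L(x,y,0) + z·(w_L(x,y,0) − 1)/(x+y−1).) -/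
import Mathlib


/-- Proposition 3.38(b), algebraic content: `φ(w) = w + z·(w − 1)/(x + y − 1)`
is a homomorphism from the Conway algebra of Example 2.1.8 to the Conway
algebra of Proposition 3.38(a): it sends basepoints to basepoints and
intertwines both pairs of operations. -/
theorem threeVariable_homomorphism {K : Type*} [Field K] (x y z : K)
    (hx : x ≠ 0) (hy : y ≠ 0) (hxy : x + y ≠ 1)
    (φ : K → K) (hφ : ∀ w : K, φ w = w + z * (w - 1) / (x + y - 1))
    (bar ast bar' ast' : K → K → K)
    (hbar : ∀ u w : K, bar u w = x⁻¹ * (w - y * u))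
    (hast : ∀ u w : K, ast u w = y⁻¹ * (w - x * u))
    (hbar' : ∀ u w : K, bar' u w = x⁻¹ * (w - z - y * u))
    (hast' : ∀ u w : K, ast' u w = y⁻¹ * (w - z - x * u)) :
    (∀ n : ℕ, 1 ≤ n →
      φ ((x + y) ^ (n - 1)) =
        (x + y) ^ (n - 1) + z * ∑ k ∈ Finset.range (n - 1), (x + y) ^ k) ∧
    (∀ u w : K, φ (bar u w) = bar' (φ u) (φ w)) ∧
    (∀ u w : K, φ (ast u w) = ast' (φ u) (φ w)) := by
  have hne : x + y - 1 ≠ 0 := sub_ne_zero.mpr hxy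
  refine ⟨?_, ?_, ?_⟩
  · intro n hn
    rw [hφ, geom_sum_eq (by simpa using hxy)]
    field_simp
  · intro u w
    rw [hφ, hφ, hφ, hbar, hbar']
    field_simp
    ring
  · intro u w
    rw [hφ, hφ, hφ, hast, hast']
    field_simp
    ring
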